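/- If σ = π[α_1, …, α_k] is an inflation of π ∈ S_k by blocks α_i ∈ {[3142], [2413]}, then every digit of σ ∈ S_{4k} is a separator. -/

import Mathlib

/-- The entry at position `k` of `σ` (0-indexed) is a *vertical separator*:
there are positions `j, j+1, j+2` with `k = j+1` and `|σ j - σ (j+2)| = 1`. -/
def IsVSepPos {n : ℕ} (σ : Equiv.Perm (Fin n)) (k : Fin n) : Prop :=
  ∃ (j : ℕ) (h : j + 2 < n), (k : ℕ) = j + 1 ∧
    (((σ ⟨j, by omega⟩).val : ℤ) - ((σ ⟨j + 2, h⟩).val : ℤ)).natAbs = 1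

/-- The value `b` is a vertical separator of `σ`. -/
def IsVSepVal {n : ℕ} (σ : Equiv.Perm (Fin n)) (b : Fin n) : Prop :=
  IsVSepPos σ (σ⁻¹ b)

/-- The value `a` is a *horizontal separator* of `σ`: the values `a-1` and `a+1`
occupy adjacent positions of `σ` (their sum is `2a` and they differ by `2`). -/
def IsHSepVal {n : ℕ} (σ : Equiv.Perm (Fin n)) (a : Fin n) : Prop :=
  ∃ (j : ℕ) (h : j + 1 < n),
    (((σ ⟨j, by omega⟩).val : ℤ) - ((σ ⟨j + 1, h⟩).val : ℤ)).natAbs = 2 ∧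
    ((σ ⟨j, by omega⟩).val : ℤ) + ((σ ⟨j + 1, h⟩).val : ℤ) = 2 * (a : ℤ)

/-- `σ` has a bond at positions `j, j+1`. -/
def PermBondAt {n : ℕ} (σ : Equiv.Perm (Fin n)) (j : ℕ) (h : j + 1 < n) : Prop :=
  (((σ ⟨j, by omega⟩).val : ℤ) - ((σ ⟨j + 1, h⟩).val : ℤ)).natAbs = 1

/-- The sequence obtained from `σ` by deleting the entry at position `p`
and standardizing. -/
def delSeq {n : ℕ} (σ : Equiv.Perm (Fin n)) (p : Fin n) : Fin (n - 1) → ℕ :=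
  fun k =>
    let q : Fin n :=
      if (k : ℕ) < (p : ℕ) then ⟨k, by have := k.isLt; omega⟩
      else ⟨(k : ℕ) + 1, by have := k.isLt; omega⟩
    if (σ q).val < (σ p).val then (σ q).val else (σ q).val - 1

/-- A sequence has a bond at positions `j, j+1`. -/
def SeqBondAt {m : ℕ} (g : Fin m → ℕ) (j : ℕ) (h : j + 1 < m) : Prop :=
  ((g ⟨j, by omega⟩ : ℤ) - (g ⟨j + 1, h⟩ : ℤ)).natAbs = 1

/-- The number of bonds of a sequence. -/
noncomputable def seqBondCount {m : ℕ} (g : Fin m → ℕ) : ℕ :=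
  Nat.card {p : Fin m × Fin m //
    (p.2 : ℕ) = (p.1 : ℕ) + 1 ∧ ((g p.1 : ℤ) - (g p.2 : ℤ)).natAbs = 1}

/-- The number of bonds of `σ`. -/
noncomputable def bondCount {n : ℕ} (σ : Equiv.Perm (Fin n)) : ℕ :=
  Nat.card {p : Fin n × Fin n //
    (p.2 : ℕ) = (p.1 : ℕ) + 1 ∧ (((σ p.1).val : ℤ) - ((σ p.2).val : ℤ)).natAbs = 1}

/-- if `σ ∈ S_{4k}` is an inflation `π[α₁,…,α_k]` with each
`αᵢ ∈ {[3142],[2413]}` (0-indexed: `![2,0,3,1]` or `![1,3,0,2]`),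
then every digit of `σ` is a separator. -/
theorem stmt9 {n k : ℕ} (hk : n = 4 * k) (σ : Equiv.Perm (Fin n))
    (π : Equiv.Perm (Fin k)) (α : Fin k → (Fin 4 → Fin 4))
    (hα : ∀ q, α q = ![2, 0, 3, 1] ∨ α q = ![1, 3, 0, 2])
    (hσ : ∀ (q : Fin k) (r : Fin 4) (h : 4 * (q : ℕ) + (r : ℕ) < n),
      (σ ⟨4 * (q : ℕ) + (r : ℕ), h⟩).val = 4 * (π q : ℕ) + (α q r : ℕ)) :
    ∀ b : Fin n, IsVSepVal σ b ∨ IsHSepVal σ b := by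
  intro b
  have hσp : σ (σ⁻¹ b) = b := Equiv.apply_symm_apply σ b
  obtain ⟨q, r, hr, hpr⟩ : ∃ (q : Fin k) (r : ℕ), r < 4 ∧
      ((σ⁻¹ b : Fin n) : ℕ) = 4 * (q : ℕ) + r := by
    have hlt := (σ⁻¹ b).isLt
    refine ⟨⟨(σ⁻¹ b : Fin n).val / 4, by omega⟩, (σ⁻¹ b : Fin n).val % 4, by omega, ?_⟩
    show ((σ⁻¹ b : Fin n) : ℕ) = 4 * ((σ⁻¹ b : Fin n).val / 4) + (σ⁻¹ b : Fin n).val % 4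
    omega
  have hqk : (q : ℕ) < k := q.isLt
  have hq4 : 4 * (q : ℕ) + 3 < n := by omega
  rcases hα q with hc | hc
  · -- α q = ![2,0,3,1]
    have K : ∀ (m r' v : ℕ) (h : m < n), r' < 4 → m = 4 * (q : ℕ) + r' →
        (∀ hr' : r' < 4, ((![2, 0, 3, 1] : Fin 4 → Fin 4) ⟨r', hr'⟩ : ℕ) = v) →
        (σ ⟨m, h⟩).val = 4 * (π q : ℕ) + v := by
      rintro m r' v h hr' rfl hv
      have h2 := hσ q ⟨r', hr'⟩ h
      rw [hc, hv hr'] at h2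
      exact h2
    have hb : (b : ℕ) = 4 * (π q : ℕ) + ((![2, 0, 3, 1] : Fin 4 → Fin 4) ⟨r, hr⟩ : ℕ) := by
      conv_lhs => rw [← hσp]
      exact K _ r _ (σ⁻¹ b).isLt hr hpr (fun _ => rfl)
    interval_cases r
    · -- value offset 2 : horizontal, j = 4q+2
      have hb' : (b : ℕ) = 4 * (π q : ℕ) + 2 := hb
      have e1 := K (4 * (q : ℕ) + 2) 2 3 (by omega) (by omega) rfl (fun _ => rfl)
      have e2 := K (4 * (q : ℕ) + 2 + 1) 3 1 (by omega) (by omega) (by omega) (fun _ => rfl)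
      exact Or.inr ⟨4 * (q : ℕ) + 2, by omega, by omega, by omega⟩
    · -- value offset 0 : vertical, j = 4q
      have e1 := K (4 * (q : ℕ)) 0 2 (by omega) (by omega) (by omega) (fun _ => rfl)
      have e2 := K (4 * (q : ℕ) + 2) 2 3 (by omega) (by omega) rfl (fun _ => rfl)
      exact Or.inl ⟨4 * (q : ℕ), by omega, by omega, by omega⟩
    · -- value offset 3 : vertical, j = 4q+1
      have e1 := K (4 * (q : ℕ) + 1) 1 0 (by omega) (by omega) rfl (fun _ => rfl)
      have e2 := K (4 * (q : ℕ) + 1 + 2) 3 1 (by omega) (by omega) (by omega) (fun _ => rfl)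
      exact Or.inl ⟨4 * (q : ℕ) + 1, by omega, by omega, by omega⟩
    · -- value offset 1 : horizontal, j = 4q
      have hb' : (b : ℕ) = 4 * (π q : ℕ) + 1 := hb
      have e1 := K (4 * (q : ℕ)) 0 2 (by omega) (by omega) (by omega) (fun _ => rfl)
      have e2 := K (4 * (q : ℕ) + 1) 1 0 (by omega) (by omega) rfl (fun _ => rfl)
      exact Or.inr ⟨4 * (q : ℕ), by omega, by omega, by omega⟩
  · -- α q = ![1,3,0,2]
    have K : ∀ (m r' v : ℕ) (h : m < n), r' < 4 → m = 4 * (q : ℕ) + r' →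
        (∀ hr' : r' < 4, ((![1, 3, 0, 2] : Fin 4 → Fin 4) ⟨r', hr'⟩ : ℕ) = v) →
        (σ ⟨m, h⟩).val = 4 * (π q : ℕ) + v := by
      rintro m r' v h hr' rfl hv
      have h2 := hσ q ⟨r', hr'⟩ h
      rw [hc, hv hr'] at h2
      exact h2
    have hb : (b : ℕ) = 4 * (π q : ℕ) + ((![1, 3, 0, 2] : Fin 4 → Fin 4) ⟨r, hr⟩ : ℕ) := by
      conv_lhs => rw [← hσp]
      exact K _ r _ (σ⁻¹ b).isLt hr hpr (fun _ => rfl)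
    interval_cases r
    · -- value offset 1 : horizontal, j = 4q+2
      have hb' : (b : ℕ) = 4 * (π q : ℕ) + 1 := hb
      have e1 := K (4 * (q : ℕ) + 2) 2 0 (by omega) (by omega) rfl (fun _ => rfl)
      have e2 := K (4 * (q : ℕ) + 2 + 1) 3 2 (by omega) (by omega) (by omega) (fun _ => rfl)
      exact Or.inr ⟨4 * (q : ℕ) + 2, by omega, by omega, by omega⟩
    · -- value offset 3 : vertical, j = 4q
      have e1 := K (4 * (q : ℕ)) 0 1 (by omega) (by omega) (by omega) (fun _ => rfl)
      have e2 := K (4 * (q : ℕ) + 2) 2 0 (by omega) (by omega) rfl (fun _ => rfl)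
      exact Or.inl ⟨4 * (q : ℕ), by omega, by omega, by omega⟩
    · -- value offset 0 : vertical, j = 4q+1
      have e1 := K (4 * (q : ℕ) + 1) 1 3 (by omega) (by omega) rfl (fun _ => rfl)
      have e2 := K (4 * (q : ℕ) + 1 + 2) 3 2 (by omega) (by omega) (by omega) (fun _ => rfl)
      exact Or.inl ⟨4 * (q : ℕ) + 1, by omega, by omega, by omega⟩
    · -- value offset 2 : horizontal, j = 4q
      have hb' : (b : ℕ) = 4 * (π q : ℕ) + 2 := hb
      have e1 := K (4 * (q : ℕ)) 0 1 (by omega) (by omega) (by omega) (fun _ => rfl)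
      have e2 := K (4 * (q : ℕ) + 1) 1 3 (by omega) (by omega) rfl (fun _ => rfl)
      exact Or.inr ⟨4 * (q : ℕ), by omega, by omega, by omega⟩
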